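/- Right-shift schedules dominate realised schedules pointwise: let s¹, s² be baseline schedules with the same permutation π such that s¹_{π(q)} = s²_{π(q)} and s¹_{π(k)} ≤ s²_{π(k)} for k < q. Then for every scenario Δ with t := R(s¹,Δ)_{π(q)}, the right-shift schedule Ŝ = RS(s²,q,t) satisfies Ŝ_{π(q)} = R(s¹,Δ)_{π(q)} and R(s¹,Δ)_{π(k)} ≤ Ŝ_{π(k)} for all k < q. -/

import Mathlib

/-- Length of the intersection of integer intervals [a1,b1] and [a2,b2]. -/
def lenint (a1 b1 a2 b2 : ℤ) : ℤ := max 0 (min b1 b2 - max a1 a2)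

/-- Realised schedule: position-indexed recursive definition.
`p` processing times (operation-indexed), `π` permutation of operations,
`s` baseline start times (operation-indexed), `Δ` deviations (operation-indexed). -/
def realised (p : ℕ → ℤ) (π : Equiv.Perm ℕ) (s Δ : ℕ → ℤ) : ℕ → ℤ
  | 0 => s (π 0) + Δ (π 0)
  | k + 1 => max (s (π (k + 1))) (realised p π s Δ k + p (π k)) + Δ (π (k + 1))

/-- Latest start time schedule (position-indexed). -/
def latest (p : ℕ → ℤ) (π : Equiv.Perm ℕ) (s : ℕ → ℤ) (Δmax : ℤ) : ℕ → ℤ :=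
  realised p π s (fun _ => Δmax)

/-- A scenario: all deviations in {0,…,Δmax}. -/
def IsScenario (Δmax : ℤ) (Δ : ℕ → ℤ) : Prop := ∀ j, 0 ≤ Δ j ∧ Δ j ≤ Δmax

/-- Auxiliary function for the right-shift schedule: `j` is the distance from
position `q`, i.e. the value at position `q - j`. -/
def rsAux (p : ℕ → ℤ) (π : Equiv.Perm ℕ) (L : ℕ → ℤ) (q : ℕ) (t : ℤ) : ℕ → ℤ
  | 0 => t
  | j + 1 => min (L (q - (j + 1))) (rsAux p π L q t j - p (π (q - (j + 1))))

/-- Right-shift schedule (position-indexed, meaningful for positions `k ≤ q`). -/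
def rightShift (p : ℕ → ℤ) (π : Equiv.Perm ℕ) (L : ℕ → ℤ) (q : ℕ) (t : ℤ) (k : ℕ) : ℤ :=
  rsAux p π L q t (q - k)

lemma realised_mono (p : ℕ → ℤ) (π : Equiv.Perm ℕ) (s s' Δ Δ' : ℕ → ℤ)
    (hΔ : ∀ j, Δ j ≤ Δ' j) :
    ∀ k, (∀ i ≤ k, s (π i) ≤ s' (π i)) →
      realised p π s Δ k ≤ realised p π s' Δ' k := by
  intro k
  induction k with
  | zero => intro hs; simpa [realised] using add_le_add (hs 0 le_rfl) (hΔ _)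
  | succ k ih =>
    intro hs
    have h1 : realised p π s Δ k ≤ realised p π s' Δ' k :=
      ih fun i hi => hs i (hi.trans (Nat.le_succ k))
    simp only [realised]
    exact add_le_add (max_le_max (hs _ le_rfl) (by linarith)) (hΔ _)

lemma realised_step (p : ℕ → ℤ) (π : Equiv.Perm ℕ) (s Δ : ℕ → ℤ)
    (hΔ : ∀ j, 0 ≤ Δ j) (k : ℕ) :
    realised p π s Δ k + p (π k) ≤ realised p π s Δ (k + 1) := by
  simp only [realised]
  have := le_max_right (s (π (k + 1))) (realised p π s Δ k + p (π k))
  have := hΔ (π (k + 1))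
  linarith

theorem rightShift_dominates_realised (p s₁ s₂ Δ : ℕ → ℤ) (π : Equiv.Perm ℕ)
    (Δmax : ℤ) (hp : ∀ j, 0 < p j) (hΔmax : 0 ≤ Δmax) (hΔ : IsScenario Δmax Δ)
    (q : ℕ) (heq : s₁ (π q) = s₂ (π q)) (hle : ∀ k < q, s₁ (π k) ≤ s₂ (π k)) :
    rightShift p π (latest p π s₂ Δmax) q (realised p π s₁ Δ q) q
      = realised p π s₁ Δ q ∧
    ∀ k < q, realised p π s₁ Δ k ≤
      rightShift p π (latest p π s₂ Δmax) q (realised p π s₁ Δ q) k := by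
  set L := latest p π s₂ Δmax with hL
  set t := realised p π s₁ Δ q with ht
  have key : ∀ d k, k + d = q → realised p π s₁ Δ k ≤ rsAux p π L q t d := by
    intro d
    induction d with
    | zero => intro k hk; simp at hk; subst hk; simp [rsAux, ht]
    | succ d ih =>
      intro k hk
      have hkq : k < q := by omega
      have hqk : q - (d + 1) = k := by omega
      simp only [rsAux, hqk, le_min_iff]
      constructor
      · -- realised ≤ L k
        have : realised p π s₁ Δ k ≤ realised p π s₂ (fun _ => Δmax) k :=
          realised_mono p π s₁ s₂ Δ (fun _ => Δmax) (fun j => (hΔ j).2) k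
            (fun i hi => hle i (lt_of_le_of_lt hi hkq))
        simpa [hL, latest] using this
      · have h1 : realised p π s₁ Δ k + p (π k) ≤ realised p π s₁ Δ (k + 1) :=
          realised_step p π s₁ Δ (fun j => (hΔ j).1) k
        have h2 : realised p π s₁ Δ (k + 1) ≤ rsAux p π L q t d := ih (k + 1) (by omega)
        linarith
  refine ⟨by simp [rightShift, rsAux], fun k hk => ?_⟩
  have : q - k + k = q := by omega
  have := key (q - k) k (by omega)
  simpa [rightShift] using this
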